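/- Let k be a field and A the quotient of the path algebra of the quiver with vertices 1, 2, arrows α : 2 → 1 and a loop β at 2, by the relations β² = 0 and αβ = 0 (composing left to right as in right modules). Then: (a) A/Ae_1A is isomorphic as a right A-module to the projective module P_2 = e_2A, so Ae_1A is a stratifying ideal; (b) the right A-module A/Ae_2A ≅ S_1 has an infinite minimal projective resolution ... → P_2 →^β P_2 →^β P_2 →^α P_1 → S_1 → 0, and Ae_2A is also a stratifying ideal. -/

import Mathlib

open CategoryTheory MulOpposite

section Defs

variable {A : Type} [Ring A]

/-- Left multiplication by `a` as a map of right `A`-modules (`Aᵐᵒᵖ`-modules). -/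
def lmulOp (a : A) : A →ₗ[Aᵐᵒᵖ] A where
  toFun x := a * x
  map_add' x y := mul_add a x y
  map_smul' r x := by
    simp only [MulOpposite.smul_eq_mul_unop, RingHom.id_apply, mul_assoc]

theorem lmulOp_mem_span {a y z : A} (h : a * y ∈ Submodule.span Aᵐᵒᵖ ({z} : Set A)) :
    ∀ x ∈ Submodule.span Aᵐᵒᵖ ({y} : Set A),
      lmulOp a x ∈ Submodule.span Aᵐᵒᵖ ({z} : Set A) := by
  intro x hx
  obtain ⟨r, rfl⟩ := Submodule.mem_span_singleton.mp hx
  have : lmulOp a (r • y) = r • (a * y) := by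
    simp only [lmulOp, LinearMap.coe_mk, AddHom.coe_mk, MulOpposite.smul_eq_mul_unop,
      mul_assoc]
  rw [this]
  exact Submodule.smul_mem _ r h

/-- Left multiplication by `a`, restricted to a map `yA → zA` between cyclic right
`A`-modules (assuming `a * y ∈ zA`). -/
def lmulSpanMap (a y z : A) (h : a * y ∈ Submodule.span Aᵐᵒᵖ ({z} : Set A)) :
    (Submodule.span Aᵐᵒᵖ ({y} : Set A)) →ₗ[Aᵐᵒᵖ] (Submodule.span Aᵐᵒᵖ ({z} : Set A)) :=
  (lmulOp a).restrict (lmulOp_mem_span h)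

/-- For a right `A`-module `M` and a two-sided ideal of `A` represented by the ideal
`J` of `Aᵐᵒᵖ`, the induced map `M ⧸ M·J → N ⧸ N·J`; these quotients compute
`M ⊗_A (A ⧸ J)`. -/
noncomputable def torQuotMap (J : Ideal Aᵐᵒᵖ)
    {M N : ModuleCat Aᵐᵒᵖ} (f : M ⟶ N) :
    (M ⧸ (J • (⊤ : Submodule Aᵐᵒᵖ M))) →ₗ[Aᵐᵒᵖ] (N ⧸ (J • (⊤ : Submodule Aᵐᵒᵖ N))) :=
  Submodule.mapQ _ _ f.hom (Submodule.smul_le.mpr fun r hr m _ =>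
    Submodule.mem_comap.mpr (by
      rw [map_smul]
      exact Submodule.smul_mem_smul hr Submodule.mem_top))

/-- `Tor_i^A(A/J, A/J) = 0` for all `i > 0` (where `J` represents a two-sided ideal of
`A` as an ideal of `Aᵐᵒᵖ`): for every projective resolution of the right module `A/J`,
applying `- ⊗_A (A/J)` yields a complex exact in all positive degrees. This is the
statement that the ideal is *stratifying*, equivalently that `A → A/J` is a
homological ring epimorphism. -/
def IsStratifying (A : Type) [Ring A] (J : Ideal Aᵐᵒᵖ) : Prop :=
  ∀ (Q : ProjectiveResolution
      (ModuleCat.of Aᵐᵒᵖ (A ⧸ (J • (⊤ : Submodule Aᵐᵒᵖ A))))) (i : ℕ),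
    Function.Exact (torQuotMap J (Q.complex.d (i + 2) (i + 1)))
      (torQuotMap J (Q.complex.d (i + 1) i))

end Defs

section Tor

variable {A : Type} [Ring A]

/-- The functor `M ↦ M ⧸ M·J`. -/
noncomputable def torFunctor (A : Type) [Ring A] (J : Ideal Aᵐᵒᵖ) :
    ModuleCat Aᵐᵒᵖ ⥤ ModuleCat Aᵐᵒᵖ where
  obj M := ModuleCat.of Aᵐᵒᵖ (M ⧸ (J • (⊤ : Submodule Aᵐᵒᵖ M)))
  map f := ModuleCat.ofHom (torQuotMap J f)
  map_id M := by
    apply ModuleCat.hom_ext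
    apply Submodule.linearMap_qext
    rfl
  map_comp f g := by
    apply ModuleCat.hom_ext
    apply Submodule.linearMap_qext
    rfl

instance (J : Ideal Aᵐᵒᵖ) : (torFunctor A J).Additive where
  map_add := by
    intro X Y f g
    apply ModuleCat.hom_ext
    apply Submodule.linearMap_qext
    rfl

lemma isZero_torFunctor_obj (J : Ideal Aᵐᵒᵖ) (M : ModuleCat Aᵐᵒᵖ)
    (h : J • (⊤ : Submodule Aᵐᵒᵖ M) = ⊤) : Limits.IsZero ((torFunctor A J).obj M) := by
  have : Subsingleton (M ⧸ (J • (⊤ : Submodule Aᵐᵒᵖ M))) :=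
    Submodule.Quotient.subsingleton_iff.mpr h
  exact @ModuleCat.isZero_of_subsingleton _ _ _ this

lemma isZero_homology_of_isZero_X {K : ChainComplex (ModuleCat Aᵐᵒᵖ) ℕ} (n : ℕ)
    (h : Limits.IsZero (K.X n)) : Limits.IsZero (K.homology n) :=
  (HomologicalComplex.exactAt_iff_isZero_homology K n).mp
    (ShortComplex.exact_of_isZero_X₂ _ h)

lemma isStratifying_of_resolution (J : Ideal Aᵐᵒᵖ)
    (P : ProjectiveResolution (ModuleCat.of Aᵐᵒᵖ (A ⧸ (J • (⊤ : Submodule Aᵐᵒᵖ A)))))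
    (hP : ∀ i : ℕ, Limits.IsZero
      ((((torFunctor A J).mapHomologicalComplex _).obj P.complex).homology (i + 1))) :
    IsStratifying A J := by
  intro Q i
  have hQ : Limits.IsZero
      ((((torFunctor A J).mapHomologicalComplex _).obj Q.complex).homology (i + 1)) := by
    refine (hP i).of_iso ?_
    exact (Q.isoLeftDerivedObj (torFunctor A J) (i + 1)).symm ≪≫
      P.isoLeftDerivedObj (torFunctor A J) (i + 1)
  have hE := (HomologicalComplex.exactAt_iff_isZero_homology _ _).mpr hQ
  rw [HomologicalComplex.exactAt_iff' _ (i + 2) (i + 1) i (by simp) (by simp)] at hE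
  exact (ShortComplex.ShortExact.moduleCat_exact_iff_function_exact _).mp hE

end Tor

section Concrete
variable {k A : Type} [Field k] [Ring A] [Algebra k A]

lemma mem_span_idem {e : A} (he : e * e = e) {x : A} :
    x ∈ Submodule.span Aᵐᵒᵖ ({e} : Set A) ↔ e * x = x := by
  rw [Submodule.mem_span_singleton]
  constructor
  · rintro ⟨r, rfl⟩
    rw [MulOpposite.smul_eq_mul_unop, ← mul_assoc, he]
  · intro h
    exact ⟨op x, by rw [MulOpposite.smul_eq_mul_unop, unop_op, h]⟩

lemma lmul_mem_span {e : A} (he : e * e = e) (y : A) :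
    e * y ∈ Submodule.span Aᵐᵒᵖ ({e} : Set A) :=
  (mem_span_idem he).mpr (by rw [← mul_assoc, he])

lemma ksmul_mem {S : Submodule Aᵐᵒᵖ A} {x : A} (hx : x ∈ S) (c : k) : c • x ∈ S := by
  have h : c • x = (op (algebraMap k A c)) • x := by
    rw [MulOpposite.smul_eq_mul_unop, unop_op, Algebra.algebraMap_eq_smul_one,
      mul_smul_comm, mul_one]
  rw [h]
  exact S.smul_mem _ hx

variable {e₁ e₂ α β : A}

lemma repr4 (b : Module.Basis (Fin 4) k A) (hb : ⇑b = ![e₁, e₂, α, β]) (x : A) :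
    ∃ c : Fin 4 → k, x = c 0 • e₁ + c 1 • e₂ + c 2 • α + c 3 • β := by
  refine ⟨fun i => b.repr x i, ?_⟩
  have h := b.sum_repr x
  rw [Fin.sum_univ_four, hb] at h
  simpa using h.symm

lemma indep4 (b : Module.Basis (Fin 4) k A) (hb : ⇑b = ![e₁, e₂, α, β]) {c : Fin 4 → k}
    (h : c 0 • e₁ + c 1 • e₂ + c 2 • α + c 3 • β = 0) : ∀ i, c i = 0 := by
  have hli := b.linearIndependent
  refine Fintype.linearIndependent_iff.mp hli c ?_
  rw [Fin.sum_univ_four, hb]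
  simpa using h

end Concrete

section Concrete2
variable {k A : Type} [Field k] [Ring A] [Algebra k A] {e₁ e₂ α β : A}

-- derived multiplication rules
lemma mul_αe₁ (hα₂ : α * e₂ = α) (h21 : e₂ * e₁ = 0) : α * e₁ = 0 := by
  rw [← hα₂, mul_assoc, h21, mul_zero]

lemma mul_βe₁ (hβ₂ : β * e₂ = β) (h21 : e₂ * e₁ = 0) : β * e₁ = 0 := by
  rw [← hβ₂, mul_assoc, h21, mul_zero]

lemma mul_e₂α (hα₁ : e₁ * α = α) (h21 : e₂ * e₁ = 0) : e₂ * α = 0 := by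
  rw [← hα₁, ← mul_assoc, h21, zero_mul]

lemma mul_e₁β (hβ₁ : e₂ * β = β) (h12 : e₁ * e₂ = 0) : e₁ * β = 0 := by
  rw [← hβ₁, ← mul_assoc, h12, zero_mul]

lemma mul_αα (hα₁ : e₁ * α = α) (hα₂ : α * e₂ = α) (h21 : e₂ * e₁ = 0) : α * α = 0 := by
  calc α * α = α * (e₁ * α) := by rw [hα₁]
  _ = (α * e₁) * α := by rw [mul_assoc]
  _ = 0 := by rw [mul_αe₁ hα₂ h21, zero_mul]

lemma mul_βα (hα₁ : e₁ * α = α) (hβ₂ : β * e₂ = β) (h21 : e₂ * e₁ = 0) : β * α = 0 := by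
  calc β * α = β * (e₁ * α) := by rw [hα₁]
  _ = (β * e₁) * α := by rw [mul_assoc]
  _ = 0 := by rw [mul_βe₁ hβ₂ h21, zero_mul]

-- expansions
lemma e₂_mul_repr (b : Module.Basis (Fin 4) k A) (hb : ⇑b = ![e₁, e₂, α, β])
    (he₂ : IsIdempotentElem e₂) (h21 : e₂ * e₁ = 0) (hα₁ : e₁ * α = α)
    (hβ₁ : e₂ * β = β) (x : A) : ∃ c₁ c₃ : k, e₂ * x = c₁ • e₂ + c₃ • β := by
  obtain ⟨c, rfl⟩ := repr4 b hb x
  exact ⟨c 1, c 3, by simp [mul_add, mul_smul_comm, h21, he₂.eq, mul_e₂α hα₁ h21, hβ₁]⟩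

lemma e₁_mul_repr (b : Module.Basis (Fin 4) k A) (hb : ⇑b = ![e₁, e₂, α, β])
    (he₁ : IsIdempotentElem e₁) (h12 : e₁ * e₂ = 0) (hα₁ : e₁ * α = α)
    (hβ₁ : e₂ * β = β) (x : A) : ∃ c₀ c₂ : k, e₁ * x = c₀ • e₁ + c₂ • α := by
  obtain ⟨c, rfl⟩ := repr4 b hb x
  exact ⟨c 0, c 2, by simp [mul_add, mul_smul_comm, h12, he₁.eq, hα₁, mul_e₁β hβ₁ h12]⟩

lemma mul_e₁_repr (b : Module.Basis (Fin 4) k A) (hb : ⇑b = ![e₁, e₂, α, β])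
    (he₁ : IsIdempotentElem e₁) (h21 : e₂ * e₁ = 0) (hα₂ : α * e₂ = α)
    (hβ₂ : β * e₂ = β) (x : A) : ∃ c₀ : k, x * e₁ = c₀ • e₁ := by
  obtain ⟨c, rfl⟩ := repr4 b hb x
  exact ⟨c 0, by simp [add_mul, smul_mul_assoc, he₁.eq, h21, mul_αe₁ hα₂ h21,
    mul_βe₁ hβ₂ h21]⟩

lemma mul_e₂_repr (b : Module.Basis (Fin 4) k A) (hb : ⇑b = ![e₁, e₂, α, β])
    (he₂ : IsIdempotentElem e₂) (h12 : e₁ * e₂ = 0) (hα₂ : α * e₂ = α)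
    (hβ₂ : β * e₂ = β) (x : A) : ∃ c₁ c₂ c₃ : k, x * e₂ = c₁ • e₂ + c₂ • α + c₃ • β := by
  obtain ⟨c, rfl⟩ := repr4 b hb x
  exact ⟨c 1, c 2, c 3, by simp [add_mul, smul_mul_assoc, he₂.eq, h12, hα₂, hβ₂, add_assoc]⟩

end Concrete2

section Ideals
variable {k A : Type} [Field k] [Ring A] [Algebra k A] {e₁ e₂ α β : A}

lemma smulTop_le {e : A} (J : Ideal Aᵐᵒᵖ) (S : Submodule Aᵐᵒᵖ A)
    (hJ : J = Ideal.span (Set.range fun p : A × A => op (p.1 * e * p.2)))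
    (hg : ∀ (p : A × A) (m : A), m * (p.1 * e * p.2) ∈ S) :
    J • (⊤ : Submodule Aᵐᵒᵖ A) ≤ S := by
  rw [Submodule.smul_le]
  intro r hr m _
  rw [hJ] at hr
  induction hr using Submodule.span_induction with
  | mem x hx =>
    obtain ⟨p, rfl⟩ := hx
    simpa [MulOpposite.smul_eq_mul_unop] using hg p m
  | zero => simp
  | add x y hx hy ihx ihy => rw [add_smul]; exact S.add_mem ihx ihy
  | smul a x hx ih => rw [smul_eq_mul, mul_smul]; exact S.smul_mem a ih

lemma mem_smulTop_of {J : Ideal Aᵐᵒᵖ} {x : A} (hx : op x ∈ J) :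
    x ∈ J • (⊤ : Submodule Aᵐᵒᵖ A) := by
  have h : x = (op x) • (1 : A) := by simp [MulOpposite.smul_eq_mul_unop]
  rw [h]
  exact Submodule.smul_mem_smul hx Submodule.mem_top

lemma op_e₁_mem {J₁ : Ideal Aᵐᵒᵖ} (he₁ : IsIdempotentElem e₁)
    (hJ₁ : J₁ = Ideal.span (Set.range fun p : A × A => op (p.1 * e₁ * p.2))) :
    op e₁ ∈ J₁ := by
  rw [hJ₁]
  exact Ideal.subset_span ⟨(1, 1), by simp⟩

lemma smulTop_e₁ (b : Module.Basis (Fin 4) k A) (hb : ⇑b = ![e₁, e₂, α, β])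
    (he₁ : IsIdempotentElem e₁) (h21 : e₂ * e₁ = 0) (hα₂ : α * e₂ = α)
    (hβ₂ : β * e₂ = β) {J₁ : Ideal Aᵐᵒᵖ}
    (hJ₁ : J₁ = Ideal.span (Set.range fun p : A × A => op (p.1 * e₁ * p.2))) :
    J₁ • (⊤ : Submodule Aᵐᵒᵖ A) = Submodule.span Aᵐᵒᵖ ({e₁} : Set A) := by
  apply le_antisymm
  · refine smulTop_le J₁ _ hJ₁ (fun p m => ?_)
    obtain ⟨c₀, hc⟩ := mul_e₁_repr b hb he₁ h21 hα₂ hβ₂ (m * p.1)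
    have h : m * (p.1 * e₁ * p.2) = c₀ • (e₁ * p.2) := by
      rw [← mul_assoc, ← mul_assoc, hc, smul_mul_assoc]
    rw [h]
    exact ksmul_mem (lmul_mem_span he₁.eq p.2) c₀
  · rw [Submodule.span_le, Set.singleton_subset_iff]
    exact mem_smulTop_of (op_e₁_mem he₁ hJ₁)

lemma op_e₂_mem {J₂ : Ideal Aᵐᵒᵖ} (he₂ : IsIdempotentElem e₂)
    (hJ₂ : J₂ = Ideal.span (Set.range fun p : A × A => op (p.1 * e₂ * p.2))) :
    op e₂ ∈ J₂ := by
  rw [hJ₂]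
  exact Ideal.subset_span ⟨(1, 1), by simp⟩

lemma op_α_mem {J₂ : Ideal Aᵐᵒᵖ} (hα₂ : α * e₂ = α)
    (hJ₂ : J₂ = Ideal.span (Set.range fun p : A × A => op (p.1 * e₂ * p.2))) :
    op α ∈ J₂ := by
  rw [hJ₂]
  exact Ideal.subset_span ⟨(α, 1), by simp [hα₂]⟩

lemma smulTop_e₂ (b : Module.Basis (Fin 4) k A) (hb : ⇑b = ![e₁, e₂, α, β])
    (he₂ : IsIdempotentElem e₂) (h12 : e₁ * e₂ = 0) (hα₂ : α * e₂ = α)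
    (hβ₁ : e₂ * β = β) (hβ₂ : β * e₂ = β) {J₂ : Ideal Aᵐᵒᵖ}
    (hJ₂ : J₂ = Ideal.span (Set.range fun p : A × A => op (p.1 * e₂ * p.2))) :
    J₂ • (⊤ : Submodule Aᵐᵒᵖ A) = Submodule.span Aᵐᵒᵖ ({e₂, α} : Set A) := by
  have hmemS : ∀ y : A, e₂ * y ∈ Submodule.span Aᵐᵒᵖ ({e₂, α} : Set A) := fun y => by
    have : e₂ * y = (op y) • e₂ := by simp [MulOpposite.smul_eq_mul_unop]
    rw [this]
    exact Submodule.smul_mem _ _ (Submodule.subset_span (by simp))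
  have hmemA : ∀ y : A, α * y ∈ Submodule.span Aᵐᵒᵖ ({e₂, α} : Set A) := fun y => by
    have : α * y = (op y) • α := by simp [MulOpposite.smul_eq_mul_unop]
    rw [this]
    exact Submodule.smul_mem _ _ (Submodule.subset_span (by simp))
  apply le_antisymm
  · refine smulTop_le J₂ _ hJ₂ (fun p m => ?_)
    obtain ⟨c₁, c₂, c₃, hc⟩ := mul_e₂_repr b hb he₂ h12 hα₂ hβ₂ (m * p.1)
    have h : m * (p.1 * e₂ * p.2) =
        c₁ • (e₂ * p.2) + c₂ • (α * p.2) + c₃ • (β * p.2) := by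
      rw [← mul_assoc, ← mul_assoc, hc, add_mul, add_mul, smul_mul_assoc,
        smul_mul_assoc, smul_mul_assoc]
    rw [h]
    have hβp : β * p.2 ∈ Submodule.span Aᵐᵒᵖ ({e₂, α} : Set A) := by
      have : β * p.2 = e₂ * (β * p.2) := by rw [← mul_assoc, hβ₁]
      rw [this]; exact hmemS _
    exact Submodule.add_mem _ (Submodule.add_mem _ (ksmul_mem (hmemS p.2) c₁)
      (ksmul_mem (hmemA p.2) c₂)) (ksmul_mem hβp c₃)
  · rw [Submodule.span_le]
    rintro x (rfl | rfl)
    · exact mem_smulTop_of (op_e₂_mem he₂ hJ₂)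
    · exact mem_smulTop_of (op_α_mem hα₂ hJ₂)

lemma op_mem_jacobson_of_sandwich (x : A) (hx : ∀ s : A, x * s * x = 0) :
    op x ∈ Ideal.jacobson (⊥ : Ideal Aᵐᵒᵖ) := by
  rw [Ideal.jacobson]
  refine Submodule.mem_sInf.mpr ?_
  rintro M ⟨-, hM⟩
  by_contra hxM
  have hlt : M < M ⊔ Ideal.span {op x} := by
    refine lt_of_le_of_ne le_sup_left (fun h => hxM ?_)
    rw [h]
    exact Submodule.mem_sup_right (Ideal.subset_span rfl)
  have htop : M ⊔ Ideal.span {op x} = ⊤ := hM.out.2 _ hlt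
  have h1 : (1 : Aᵐᵒᵖ) ∈ M ⊔ Ideal.span {op x} := htop ▸ Submodule.mem_top
  obtain ⟨m, hm, y, hy, hmy⟩ := Submodule.mem_sup.mp h1
  obtain ⟨r, rfl⟩ := Submodule.mem_span_singleton.mp hy
  have hy2 : (r • op x) * (r • op x) = 0 := by
    rw [smul_eq_mul]
    have : r * op x = op (x * unop r) := by rw [← op_unop r, ← op_mul, op_unop]
    rw [this, ← op_mul, ← mul_assoc, hx (unop r), zero_mul, op_zero]
  have hm1 : m = 1 - r • op x := eq_sub_of_add_eq hmy
  have hunit : IsUnit m := by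
    refine isUnit_iff_exists.mpr ⟨1 + r • op x, ?_, ?_⟩
    · rw [hm1, sub_mul, one_mul, mul_add, mul_one, hy2, add_zero, add_sub_cancel_right]
    · rw [hm1, add_mul, one_mul, mul_sub, mul_one, hy2, sub_zero, sub_add_cancel]
  exact hM.ne_top (Ideal.eq_top_of_isUnit_mem M hm hunit)

end Ideals

section Maps
variable {k A : Type} [Field k] [Ring A] [Algebra k A] {e₁ e₂ α β : A}

lemma lmulSpanMap_coe (a y z : A) (h : a * y ∈ Submodule.span Aᵐᵒᵖ ({z} : Set A))
    (x : Submodule.span Aᵐᵒᵖ ({y} : Set A)) :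
    (lmulSpanMap a y z h x : A) = a * (x : A) := rfl

def unopLinearEquiv (A : Type) [Ring A] : Aᵐᵒᵖ ≃ₗ[Aᵐᵒᵖ] A where
  toFun := unop
  invFun := op
  map_add' x y := rfl
  map_smul' r x := by
    simp only [smul_eq_mul, MulOpposite.smul_eq_mul_unop, unop_mul, RingHom.id_apply]
  left_inv x := rfl
  right_inv x := rfl

lemma projective_self_op (A : Type) [Ring A] : Module.Projective Aᵐᵒᵖ A :=
  Module.Projective.of_equiv (unopLinearEquiv A)

lemma projective_span {e : A} (he : e * e = e) :
    Module.Projective Aᵐᵒᵖ ↥(Submodule.span Aᵐᵒᵖ ({e} : Set A)) := by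
  haveI := projective_self_op A
  refine Module.Projective.of_split (Submodule.span Aᵐᵒᵖ ({e} : Set A)).subtype
    (LinearMap.codRestrict _ (lmulOp e) (fun x => lmul_mem_span he x)) ?_
  ext x
  show e * (x : A) = (x : A)
  exact (mem_span_idem he).mp x.2

lemma mem_smulTop_span {e : A} {I : Ideal Aᵐᵒᵖ}
    {z : ↥(Submodule.span Aᵐᵒᵖ ({e} : Set A))} (hz : op (z : A) ∈ I)
    (hez : e * (z : A) = (z : A)) :
    z ∈ I • (⊤ : Submodule Aᵐᵒᵖ ↥(Submodule.span Aᵐᵒᵖ ({e} : Set A))) := by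
  have h : z = (op (z : A)) •
      (⟨e, Submodule.mem_span_singleton_self e⟩ :
        ↥(Submodule.span Aᵐᵒᵖ ({e} : Set A))) := by
    apply Subtype.ext
    show (z : A) = (op (z : A)) • e
    rw [MulOpposite.smul_eq_mul_unop, unop_op, hez]
  rw [h]
  exact Submodule.smul_mem_smul hz Submodule.mem_top

lemma smulTop_span_eq_top (he₂ : IsIdempotentElem e₂) {J₂ : Ideal Aᵐᵒᵖ}
    (hopE : op e₂ ∈ J₂) :
    J₂ • (⊤ : Submodule Aᵐᵒᵖ ↥(Submodule.span Aᵐᵒᵖ ({e₂} : Set A))) = ⊤ := by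
  rw [eq_top_iff]
  intro z _
  have hez : e₂ * (z : A) = (z : A) := (mem_span_idem he₂.eq).mp z.2
  refine mem_smulTop_span ?_ hez
  have h : op (z : A) = op (z : A) * op e₂ := by rw [← op_mul, hez]
  rw [h]
  exact Ideal.mul_mem_left _ _ hopE

-- exactness lemmas
lemma exact_ββ (b : Module.Basis (Fin 4) k A) (hb : ⇑b = ![e₁, e₂, α, β])
    (he₂ : IsIdempotentElem e₂) (h21 : e₂ * e₁ = 0) (hα₁ : e₁ * α = α)
    (hβ₁ : e₂ * β = β) (hβ₂ : β * e₂ = β) (hββ : β * β = 0) (hβne : β ≠ 0)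
    (hβ' : β * e₂ ∈ Submodule.span Aᵐᵒᵖ ({e₂} : Set A)) :
    Function.Exact (lmulSpanMap β e₂ e₂ hβ') (lmulSpanMap β e₂ e₂ hβ') := by
  intro y
  rw [Set.mem_range]
  constructor
  · intro hy
    have hyv : β * (y : A) = 0 := congrArg Subtype.val hy
    obtain ⟨c₁, c₃, hc⟩ := e₂_mul_repr b hb he₂ h21 hα₁ hβ₁ (y : A)
    have hey : e₂ * (y : A) = (y : A) := (mem_span_idem he₂.eq).mp y.2
    have hyy : (y : A) = c₁ • e₂ + c₃ • β := by rw [← hey, hc]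
    have hβy : β * (y : A) = c₁ • β := by
      rw [hyy, mul_add, mul_smul_comm, mul_smul_comm, hβ₂, hββ, smul_zero, add_zero]
    have hc₁ : c₁ = 0 := by
      have h0 : c₁ • β = 0 := by rw [← hβy, hyv]
      exact (smul_eq_zero.mp h0).resolve_right hβne
    refine ⟨⟨c₃ • e₂, ksmul_mem (Submodule.mem_span_singleton_self e₂) c₃⟩, ?_⟩
    apply Subtype.ext
    show β * (c₃ • e₂) = (y : A)
    rw [mul_smul_comm, hβ₂, hyy, hc₁, zero_smul, zero_add]
  · rintro ⟨x, rfl⟩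
    apply Subtype.ext
    show β * (β * (x : A)) = 0
    rw [← mul_assoc, hββ, zero_mul]

lemma exact_βα (b : Module.Basis (Fin 4) k A) (hb : ⇑b = ![e₁, e₂, α, β])
    (he₂ : IsIdempotentElem e₂) (h21 : e₂ * e₁ = 0) (hα₁ : e₁ * α = α)
    (hα₂ : α * e₂ = α) (hβ₁ : e₂ * β = β) (hβ₂ : β * e₂ = β)
    (hαβ : α * β = 0) (hαne : α ≠ 0)
    (hα' : α * e₂ ∈ Submodule.span Aᵐᵒᵖ ({e₁} : Set A))
    (hβ' : β * e₂ ∈ Submodule.span Aᵐᵒᵖ ({e₂} : Set A)) :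
    Function.Exact (lmulSpanMap β e₂ e₂ hβ') (lmulSpanMap α e₂ e₁ hα') := by
  intro y
  rw [Set.mem_range]
  constructor
  · intro hy
    have hyv : α * (y : A) = 0 := congrArg Subtype.val hy
    obtain ⟨c₁, c₃, hc⟩ := e₂_mul_repr b hb he₂ h21 hα₁ hβ₁ (y : A)
    have hey : e₂ * (y : A) = (y : A) := (mem_span_idem he₂.eq).mp y.2
    have hyy : (y : A) = c₁ • e₂ + c₃ • β := by rw [← hey, hc]
    have hαy : α * (y : A) = c₁ • α := by
      rw [hyy, mul_add, mul_smul_comm, mul_smul_comm, hα₂, hαβ, smul_zero, add_zero]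
    have hc₁ : c₁ = 0 := by
      have h0 : c₁ • α = 0 := by rw [← hαy, hyv]
      exact (smul_eq_zero.mp h0).resolve_right hαne
    refine ⟨⟨c₃ • e₂, ksmul_mem (Submodule.mem_span_singleton_self e₂) c₃⟩, ?_⟩
    apply Subtype.ext
    show β * (c₃ • e₂) = (y : A)
    rw [mul_smul_comm, hβ₂, hyy, hc₁, zero_smul, zero_add]
  · rintro ⟨x, rfl⟩
    apply Subtype.ext
    show α * (β * (x : A)) = 0
    rw [← mul_assoc, hαβ, zero_mul]

end Maps

section MapsB
variable {k A : Type} [Field k] [Ring A] [Algebra k A] {e₁ e₂ α β : A}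

lemma exact_αp (he₁ : IsIdempotentElem e₁) (he₂ : IsIdempotentElem e₂)
    (h12 : e₁ * e₂ = 0) (hα₁ : e₁ * α = α) (hα₂ : α * e₂ = α)
    {J₂ : Ideal Aᵐᵒᵖ}
    (hI₂ : J₂ • (⊤ : Submodule Aᵐᵒᵖ A) = Submodule.span Aᵐᵒᵖ ({e₂, α} : Set A))
    (hα' : α * e₂ ∈ Submodule.span Aᵐᵒᵖ ({e₁} : Set A)) :
    Function.Exact (lmulSpanMap α e₂ e₁ hα')
      ((J₂ • (⊤ : Submodule Aᵐᵒᵖ A)).mkQ.comp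
        (Submodule.span Aᵐᵒᵖ ({e₁} : Set A)).subtype) := by
  intro y
  rw [Set.mem_range]
  constructor
  · intro hy
    have hym : (y : A) ∈ J₂ • (⊤ : Submodule Aᵐᵒᵖ A) :=
      (Submodule.Quotient.mk_eq_zero _).mp hy
    rw [hI₂] at hym
    obtain ⟨r, s, hrs⟩ := Submodule.mem_span_pair.mp hym
    have hey : e₁ * (y : A) = (y : A) := (mem_span_idem he₁.eq).mp y.2
    have hyα : (y : A) = α * unop s := by
      rw [← hey, ← hrs, mul_add, MulOpposite.smul_eq_mul_unop,
        MulOpposite.smul_eq_mul_unop, ← mul_assoc, ← mul_assoc, h12, zero_mul,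
        zero_add, hα₁]
    refine ⟨⟨e₂ * unop s, lmul_mem_span he₂.eq _⟩, ?_⟩
    apply Subtype.ext
    show α * (e₂ * unop s) = (y : A)
    rw [← mul_assoc, hα₂, hyα]
  · rintro ⟨x, rfl⟩
    have hm : α * (x : A) ∈ J₂ • (⊤ : Submodule Aᵐᵒᵖ A) := by
      rw [hI₂]
      have h : α * (x : A) = (op (x : A)) • α := by
        simp [MulOpposite.smul_eq_mul_unop]
      rw [h]
      exact Submodule.smul_mem _ _ (Submodule.subset_span (by simp))
    exact (Submodule.Quotient.mk_eq_zero _).mpr hm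

lemma surj_p (b : Module.Basis (Fin 4) k A) (hb : ⇑b = ![e₁, e₂, α, β])
    (hβ₁ : e₂ * β = β) {J₂ : Ideal Aᵐᵒᵖ}
    (hI₂ : J₂ • (⊤ : Submodule Aᵐᵒᵖ A) = Submodule.span Aᵐᵒᵖ ({e₂, α} : Set A)) :
    Function.Surjective ((J₂ • (⊤ : Submodule Aᵐᵒᵖ A)).mkQ.comp
      (Submodule.span Aᵐᵒᵖ ({e₁} : Set A)).subtype) := by
  have hβS : β ∈ Submodule.span Aᵐᵒᵖ ({e₂, α} : Set A) := by
    have h : β = (op β) • e₂ := by simp [MulOpposite.smul_eq_mul_unop, hβ₁]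
    rw [h]
    exact Submodule.smul_mem _ _ (Submodule.subset_span (by simp))
  intro z
  obtain ⟨y, rfl⟩ := Submodule.mkQ_surjective _ z
  obtain ⟨c, hc⟩ := repr4 b hb y
  refine ⟨⟨c 0 • e₁, ksmul_mem (Submodule.mem_span_singleton_self e₁) _⟩, ?_⟩
  show Submodule.Quotient.mk (c 0 • e₁) = Submodule.Quotient.mk y
  rw [Submodule.Quotient.eq]
  have h : c 0 • e₁ - y = -(c 1 • e₂ + c 2 • α + c 3 • β) := by
    rw [hc]; abel
  rw [h, hI₂]
  refine Submodule.neg_mem _ (Submodule.add_mem _ (Submodule.add_mem _ ?_ ?_) ?_)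
  · exact ksmul_mem (Submodule.subset_span (by simp)) _
  · exact ksmul_mem (Submodule.subset_span (by simp)) _
  · exact ksmul_mem hβS _

-- sandwich lemmas for the Jacobson radical
lemma sandwich_α (b : Module.Basis (Fin 4) k A) (hb : ⇑b = ![e₁, e₂, α, β])
    (he₁ : IsIdempotentElem e₁) (h21 : e₂ * e₁ = 0) (hα₁ : e₁ * α = α)
    (hα₂ : α * e₂ = α) (hβ₂ : β * e₂ = β) (s : A) : α * s * α = 0 := by
  obtain ⟨c, hc⟩ := mul_e₁_repr b hb he₁ h21 hα₂ hβ₂ s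
  have h : s * α = c • α := by
    rw [← hα₁, ← mul_assoc, hc, smul_mul_assoc, hα₁]
  rw [mul_assoc, h, mul_smul_comm, mul_αα hα₁ hα₂ h21, smul_zero]

lemma sandwich_β (b : Module.Basis (Fin 4) k A) (hb : ⇑b = ![e₁, e₂, α, β])
    (he₂ : IsIdempotentElem e₂) (h12 : e₁ * e₂ = 0) (hα₂ : α * e₂ = α)
    (hβ₁ : e₂ * β = β) (hβ₂ : β * e₂ = β) (hββ : β * β = 0) (hαβ : α * β = 0)
    (s : A) : β * s * β = 0 := by
  obtain ⟨c₁, c₂, c₃, hc⟩ := mul_e₂_repr b hb he₂ h12 hα₂ hβ₂ s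
  have h : s * β = c₁ • β := by
    rw [← hβ₁, ← mul_assoc, hc, add_mul, add_mul, smul_mul_assoc, smul_mul_assoc,
      smul_mul_assoc, hβ₁, hαβ, hββ, smul_zero, smul_zero, add_zero, add_zero]
  rw [mul_assoc, h, mul_smul_comm, hββ, smul_zero]

lemma range_le_rad {e a : A} (hea : e * a = a)
    (ha : op a ∈ Ideal.jacobson (⊥ : Ideal Aᵐᵒᵖ))
    (h : a * e₂ ∈ Submodule.span Aᵐᵒᵖ ({e} : Set A)) :
    LinearMap.range (lmulSpanMap a e₂ e h) ≤
      (Ideal.jacobson (⊥ : Ideal Aᵐᵒᵖ)) •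
        (⊤ : Submodule Aᵐᵒᵖ ↥(Submodule.span Aᵐᵒᵖ ({e} : Set A))) := by
  rintro z hz
  obtain ⟨x, rfl⟩ := LinearMap.mem_range.mp hz
  refine mem_smulTop_span ?_ ?_
  · have hop : op (a * (x : A)) = op (x : A) * op a := by rw [← op_mul]
    show op ((lmulSpanMap a e₂ e h x : A)) ∈ _
    rw [lmulSpanMap_coe, hop]
    exact Ideal.mul_mem_left _ _ ha
  · show e * (lmulSpanMap a e₂ e h x : A) = _
    rw [lmulSpanMap_coe, ← mul_assoc, hea]

end MapsB

section Iso
variable {k A : Type} [Field k] [Ring A] [Algebra k A] {e₁ e₂ α β : A}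

noncomputable def quotIso (he₁ : IsIdempotentElem e₁) (he₂ : IsIdempotentElem e₂)
    (h21 : e₂ * e₁ = 0) (hsum : e₁ + e₂ = 1) {J₁ : Ideal Aᵐᵒᵖ}
    (hI₁ : J₁ • (⊤ : Submodule Aᵐᵒᵖ A) = Submodule.span Aᵐᵒᵖ ({e₁} : Set A)) :
    (A ⧸ (J₁ • (⊤ : Submodule Aᵐᵒᵖ A))) ≃ₗ[Aᵐᵒᵖ]
      ↥(Submodule.span Aᵐᵒᵖ ({e₂} : Set A)) := by
  let f : A →ₗ[Aᵐᵒᵖ] ↥(Submodule.span Aᵐᵒᵖ ({e₂} : Set A)) :=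
    LinearMap.codRestrict _ (lmulOp e₂) (fun x => lmul_mem_span he₂.eq x)
  have hker : LinearMap.ker f = J₁ • (⊤ : Submodule Aᵐᵒᵖ A) := by
    rw [hI₁]
    ext x
    constructor
    · intro hx
      have hx0 : e₂ * x = 0 := congrArg Subtype.val hx
      have h : x = e₁ * x := by
        have h1 : (e₁ + e₂) * x = x := by rw [hsum, one_mul]
        rw [add_mul, hx0, add_zero] at h1
        exact h1.symm
      rw [h]
      exact lmul_mem_span he₁.eq x
    · intro hx
      have h : e₁ * x = x := (mem_span_idem he₁.eq).mp hx
      have h0 : e₂ * x = 0 := by rw [← h, ← mul_assoc, h21, zero_mul]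
      exact Subtype.ext h0
  have hsurj : Function.Surjective f := fun y =>
    ⟨(y : A), Subtype.ext ((mem_span_idem he₂.eq).mp y.2)⟩
  exact (Submodule.quotEquivOfEq _ _ hker.symm).trans
    (f.quotKerEquivOfSurjective hsurj)

end Iso

section Res
variable {k A : Type} [Field k] [Ring A] [Algebra k A] {e₁ e₂ α β : A}

lemma sq0
    (hα' : α * e₂ ∈ Submodule.span Aᵐᵒᵖ ({e₁} : Set A))
    (hβ' : β * e₂ ∈ Submodule.span Aᵐᵒᵖ ({e₂} : Set A))
    (hαβ : α * β = 0) :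
    ModuleCat.ofHom (lmulSpanMap β e₂ e₂ hβ') ≫
      ModuleCat.ofHom (lmulSpanMap α e₂ e₁ hα') = 0 := by
  apply ModuleCat.hom_ext
  apply LinearMap.ext
  intro (x : ↥(Submodule.span Aᵐᵒᵖ ({e₂} : Set A)))
  apply Subtype.ext
  show α * (β * (x : A)) = 0
  rw [← mul_assoc, hαβ, zero_mul]

lemma sqs
    (hβ' : β * e₂ ∈ Submodule.span Aᵐᵒᵖ ({e₂} : Set A))
    (hββ : β * β = 0) :
    ModuleCat.ofHom (lmulSpanMap β e₂ e₂ hβ') ≫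
      ModuleCat.ofHom (lmulSpanMap β e₂ e₂ hβ') = 0 := by
  apply ModuleCat.hom_ext
  apply LinearMap.ext
  intro (x : ↥(Submodule.span Aᵐᵒᵖ ({e₂} : Set A)))
  apply Subtype.ext
  show β * (β * (x : A)) = 0
  rw [← mul_assoc, hββ, zero_mul]

noncomputable def resC
    (hα' : α * e₂ ∈ Submodule.span Aᵐᵒᵖ ({e₁} : Set A))
    (hβ' : β * e₂ ∈ Submodule.span Aᵐᵒᵖ ({e₂} : Set A))
    (hαβ : α * β = 0) (hββ : β * β = 0) : ChainComplex (ModuleCat Aᵐᵒᵖ) ℕ :=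
  ChainComplex.of
    (fun n => match n with
      | 0 => ModuleCat.of Aᵐᵒᵖ ↥(Submodule.span Aᵐᵒᵖ ({e₁} : Set A))
      | _ + 1 => ModuleCat.of Aᵐᵒᵖ ↥(Submodule.span Aᵐᵒᵖ ({e₂} : Set A)))
    (fun n => match n with
      | 0 => ModuleCat.ofHom (lmulSpanMap α e₂ e₁ hα')
      | _ + 1 => ModuleCat.ofHom (lmulSpanMap β e₂ e₂ hβ'))
    (fun n => match n with
      | 0 => sq0 hα' hβ' hαβ
      | _ + 1 => sqs hβ' hββ)

variable (hα' : α * e₂ ∈ Submodule.span Aᵐᵒᵖ ({e₁} : Set A))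
    (hβ' : β * e₂ ∈ Submodule.span Aᵐᵒᵖ ({e₂} : Set A))
    (hαβ : α * β = 0) (hββ : β * β = 0)

lemma resC_d0 : (resC hα' hβ' hαβ hββ).d 1 0 = ModuleCat.ofHom (lmulSpanMap α e₂ e₁ hα') :=
  by simp only [resC]; exact ChainComplex.of_d _ _ 0

lemma resC_dsucc (n : ℕ) :
    (resC hα' hβ' hαβ hββ).d (n + 2) (n + 1) = ModuleCat.ofHom (lmulSpanMap β e₂ e₂ hβ') :=
  by simp only [resC]; exact ChainComplex.of_d _ _ (n + 1)

lemma mem_I₂_αmul {J₂ : Ideal Aᵐᵒᵖ}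
    (hI₂ : J₂ • (⊤ : Submodule Aᵐᵒᵖ A) = Submodule.span Aᵐᵒᵖ ({e₂, α} : Set A))
    (y : A) : α * y ∈ J₂ • (⊤ : Submodule Aᵐᵒᵖ A) := by
  rw [hI₂]
  have h : α * y = (op y) • α := by simp [MulOpposite.smul_eq_mul_unop]
  rw [h]
  exact Submodule.smul_mem _ _ (Submodule.subset_span (by simp))

end Res

section Res2
variable {k A : Type} [Field k] [Ring A] [Algebra k A] {e₁ e₂ α β : A}

noncomputable def resolution (b : Module.Basis (Fin 4) k A) (hb : ⇑b = ![e₁, e₂, α, β])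
    (he₁ : IsIdempotentElem e₁) (he₂ : IsIdempotentElem e₂)
    (h12 : e₁ * e₂ = 0) (h21 : e₂ * e₁ = 0)
    (hα₁ : e₁ * α = α) (hα₂ : α * e₂ = α)
    (hβ₁ : e₂ * β = β) (hβ₂ : β * e₂ = β)
    (hββ : β * β = 0) (hαβ : α * β = 0) (hαne : α ≠ 0) (hβne : β ≠ 0)
    (hα' : α * e₂ ∈ Submodule.span Aᵐᵒᵖ ({e₁} : Set A))
    (hβ' : β * e₂ ∈ Submodule.span Aᵐᵒᵖ ({e₂} : Set A))
    {J₂ : Ideal Aᵐᵒᵖ}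
    (hI₂ : J₂ • (⊤ : Submodule Aᵐᵒᵖ A) = Submodule.span Aᵐᵒᵖ ({e₂, α} : Set A)) :
    ProjectiveResolution (ModuleCat.of Aᵐᵒᵖ (A ⧸ (J₂ • (⊤ : Submodule Aᵐᵒᵖ A)))) where
  complex := resC hα' hβ' hαβ hββ
  projective n := by
    cases n with
    | zero => exact @ModuleCat.projective_of_categoryTheory_projective _ _ _ (projective_span he₁.eq)
    | succ n => exact @ModuleCat.projective_of_categoryTheory_projective _ _ _ (projective_span he₂.eq)
  π := (ChainComplex.toSingle₀Equiv _ _).symm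
    ⟨ModuleCat.ofHom ((J₂ • (⊤ : Submodule Aᵐᵒᵖ A)).mkQ.comp
        (Submodule.span Aᵐᵒᵖ ({e₁} : Set A)).subtype), by
      rw [resC_d0]
      apply ModuleCat.hom_ext
      apply LinearMap.ext
      intro (x : ↥(Submodule.span Aᵐᵒᵖ ({e₂} : Set A)))
      exact (Submodule.Quotient.mk_eq_zero _).mpr (mem_I₂_αmul hI₂ (x : A))⟩
  quasiIso := ⟨fun n => by
    have w : ModuleCat.ofHom (lmulSpanMap α e₂ e₁ hα') ≫
        ModuleCat.ofHom ((J₂ • (⊤ : Submodule Aᵐᵒᵖ A)).mkQ.comp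
          (Submodule.span Aᵐᵒᵖ ({e₁} : Set A)).subtype) = 0 := by
      apply ModuleCat.hom_ext
      apply LinearMap.ext
      intro (x : ↥(Submodule.span Aᵐᵒᵖ ({e₂} : Set A)))
      exact (Submodule.Quotient.mk_eq_zero _).mpr (mem_I₂_αmul hI₂ (x : A))
    cases n with
    | zero =>
      rw [ChainComplex.quasiIsoAt₀_iff, ShortComplex.quasiIso_iff_of_zeros']
      · refine (ShortComplex.exact_and_epi_g_iff_of_iso
          (ShortComplex.isoMk (Iso.refl _) (Iso.refl _) (Iso.refl _) ?_ ?_ :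
            _ ≅ ShortComplex.mk _ _ w)).2
          ⟨(ShortComplex.ShortExact.moduleCat_exact_iff_function_exact _).mpr
              (exact_αp he₁ he₂ h12 hα₁ hα₂ hI₂ hα'),
            (ModuleCat.epi_iff_surjective _).mpr (surj_p b hb hβ₁ hI₂)⟩
        · simp [HomologicalComplex.sc', resC_d0]
        · simp [ChainComplex.toSingle₀Equiv]
      all_goals rfl
    | succ n =>
      rw [quasiIsoAt_iff_exactAt' _ _ (ChainComplex.exactAt_succ_single_obj _ _)]
      rw [HomologicalComplex.exactAt_iff' _ (n + 2) (n + 1) n (by simp) (by simp)]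
      apply (ShortComplex.ShortExact.moduleCat_exact_iff_function_exact _).mpr
      dsimp only [HomologicalComplex.sc', HomologicalComplex.shortComplexFunctor'_obj_f,
        HomologicalComplex.shortComplexFunctor'_obj_g]
      show Function.Exact (ConcreteCategory.hom ((resC hα' hβ' hαβ hββ).d (n + 2) (n + 1)))
        (ConcreteCategory.hom ((resC hα' hβ' hαβ hββ).d (n + 1) n))
      cases n with
      | zero =>
        rw [resC_dsucc, resC_d0]
        exact exact_βα b hb he₂ h21 hα₁ hα₂ hβ₁ hβ₂ hαβ hαne hα' hβ'
      | succ m =>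
        rw [resC_dsucc, resC_dsucc]
        exact exact_ββ b hb he₂ h21 hα₁ hβ₁ hβ₂ hββ hβne hβ'⟩

end Res2

/-- let `A` be the quotient of the path algebra of the quiver with
vertices `1, 2`, an arrow `α : 2 → 1` and a loop `β` at `2`, by the relations `β² = 0`,
`αβ = 0` (axiomatized by its basis `{e₁, e₂, α, β}` and multiplication rules). Then:
(a) `A/Ae₁A` is isomorphic as a right `A`-module to `P₂ = e₂A`, and `Ae₁A` is a
stratifying ideal; (b) the right module `A/Ae₂A ≅ S₁` has the infinite minimal
projective resolution `⋯ → P₂ →^β P₂ →^β P₂ →^α P₁ → S₁ → 0`, and `Ae₂A` is also a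
stratifying ideal. -/
theorem stmt18 (k A : Type) [Field k] [Ring A] [Algebra k A]
    (e₁ e₂ α β : A)
    (he₁ : IsIdempotentElem e₁) (he₂ : IsIdempotentElem e₂)
    (h12 : e₁ * e₂ = 0) (h21 : e₂ * e₁ = 0) (hsum : e₁ + e₂ = 1)
    (hα₁ : e₁ * α = α) (hα₂ : α * e₂ = α)
    (hβ₁ : e₂ * β = β) (hβ₂ : β * e₂ = β)
    (hββ : β * β = 0) (hαβ : α * β = 0)
    (b : Module.Basis (Fin 4) k A) (hb : ⇑b = ![e₁, e₂, α, β])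
    (J₁ J₂ : Ideal Aᵐᵒᵖ)
    (hJ₁ : J₁ = Ideal.span (Set.range fun p : A × A => op (p.1 * e₁ * p.2)))
    (hJ₂ : J₂ = Ideal.span (Set.range fun p : A × A => op (p.1 * e₂ * p.2))) :
    -- (a) A/Ae₁A ≅ e₂A as right A-modules, and Ae₁A is stratifying
    Nonempty ((A ⧸ (J₁ • (⊤ : Submodule Aᵐᵒᵖ A))) ≃ₗ[Aᵐᵒᵖ]
        (Submodule.span Aᵐᵒᵖ ({e₂} : Set A))) ∧
    IsStratifying A J₁ ∧
    -- (b) the infinite minimal projective resolution of S₁ = A/Ae₂A, and Ae₂A is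
    -- stratifying
    (Module.Projective Aᵐᵒᵖ (Submodule.span Aᵐᵒᵖ ({e₁} : Set A)) ∧
      Module.Projective Aᵐᵒᵖ (Submodule.span Aᵐᵒᵖ ({e₂} : Set A)) ∧
      ∃ (hα : α * e₂ ∈ Submodule.span Aᵐᵒᵖ ({e₁} : Set A))
        (hβ : β * e₂ ∈ Submodule.span Aᵐᵒᵖ ({e₂} : Set A)),
        Function.Surjective
          ((J₂ • (⊤ : Submodule Aᵐᵒᵖ A)).mkQ.comp
            (Submodule.span Aᵐᵒᵖ ({e₁} : Set A)).subtype) ∧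
        Function.Exact (lmulSpanMap α e₂ e₁ hα)
          ((J₂ • (⊤ : Submodule Aᵐᵒᵖ A)).mkQ.comp
            (Submodule.span Aᵐᵒᵖ ({e₁} : Set A)).subtype) ∧
        Function.Exact (lmulSpanMap β e₂ e₂ hβ) (lmulSpanMap α e₂ e₁ hα) ∧
        Function.Exact (lmulSpanMap β e₂ e₂ hβ) (lmulSpanMap β e₂ e₂ hβ) ∧
        -- minimality: the images of the differentials lie in the radical
        LinearMap.range (lmulSpanMap α e₂ e₁ hα) ≤
          (Ideal.jacobson (⊥ : Ideal Aᵐᵒᵖ)) •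
            (⊤ : Submodule Aᵐᵒᵖ (Submodule.span Aᵐᵒᵖ ({e₁} : Set A))) ∧
        LinearMap.range (lmulSpanMap β e₂ e₂ hβ) ≤
          (Ideal.jacobson (⊥ : Ideal Aᵐᵒᵖ)) •
            (⊤ : Submodule Aᵐᵒᵖ (Submodule.span Aᵐᵒᵖ ({e₂} : Set A)))) ∧
    IsStratifying A J₂ := by
  have hαne : α ≠ 0 := by
    have h := b.ne_zero 2
    rw [hb] at h
    simpa using h
  have hβne : β ≠ 0 := by
    have h := b.ne_zero 3
    rw [hb] at h
    simpa using h
  have hα' : α * e₂ ∈ Submodule.span Aᵐᵒᵖ ({e₁} : Set A) := by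
    rw [hα₂]
    exact (mem_span_idem he₁.eq).mpr hα₁
  have hβ' : β * e₂ ∈ Submodule.span Aᵐᵒᵖ ({e₂} : Set A) := by
    rw [hβ₂]
    exact (mem_span_idem he₂.eq).mpr hβ₁
  have hI₁ := smulTop_e₁ b hb he₁ h21 hα₂ hβ₂ hJ₁
  have hI₂ := smulTop_e₂ b hb he₂ h12 hα₂ hβ₁ hβ₂ hJ₂
  have hradα : op α ∈ Ideal.jacobson (⊥ : Ideal Aᵐᵒᵖ) :=
    op_mem_jacobson_of_sandwich α (sandwich_α b hb he₁ h21 hα₁ hα₂ hβ₂)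
  have hradβ : op β ∈ Ideal.jacobson (⊥ : Ideal Aᵐᵒᵖ) :=
    op_mem_jacobson_of_sandwich β (sandwich_β b hb he₂ h12 hα₂ hβ₁ hβ₂ hββ hαβ)
  refine ⟨⟨quotIso he₁ he₂ h21 hsum hI₁⟩, ?_,
    ⟨projective_span he₁.eq, projective_span he₂.eq, hα', hβ',
      surj_p b hb hβ₁ hI₂,
      exact_αp he₁ he₂ h12 hα₁ hα₂ hI₂ hα',
      exact_βα b hb he₂ h21 hα₁ hα₂ hβ₁ hβ₂ hαβ hαne hα' hβ',
      exact_ββ b hb he₂ h21 hα₁ hβ₁ hβ₂ hββ hβne hβ',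
      range_le_rad hα₁ hradα hα',
      range_le_rad hβ₁ hradβ hβ'⟩, ?_⟩
  · -- IsStratifying J₁
    haveI := projective_span (A := A) he₂.eq
    have hproj : Module.Projective Aᵐᵒᵖ (A ⧸ (J₁ • (⊤ : Submodule Aᵐᵒᵖ A))) :=
      Module.Projective.of_equiv (quotIso he₁ he₂ h21 hsum hI₁).symm
    haveI : Projective (ModuleCat.of Aᵐᵒᵖ (A ⧸ (J₁ • (⊤ : Submodule Aᵐᵒᵖ A)))) :=
      @ModuleCat.projective_of_categoryTheory_projective _ _ _ hproj
    refine isStratifying_of_resolution J₁ (ProjectiveResolution.self _) (fun i => ?_)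
    apply isZero_homology_of_isZero_X
    exact (torFunctor A J₁).map_isZero
      (HomologicalComplex.isZero_single_obj_X _ 0 _ (i + 1) (by simp))
  · -- IsStratifying J₂
    refine isStratifying_of_resolution J₂
      (resolution b hb he₁ he₂ h12 h21 hα₁ hα₂ hβ₁ hβ₂ hββ hαβ hαne hβne hα' hβ' hI₂)
      (fun i => ?_)
    apply isZero_homology_of_isZero_X
    exact isZero_torFunctor_obj J₂ _ (smulTop_span_eq_top he₂ (op_e₂_mem he₂ hJ₂))
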